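/- (Expected bound on B^t) Suppose Assumptions A1, A2 and A3 hold. Then for every outer iteration t, with B^t := | p ⟨x^{t,0,0} − x*, ∇F_m(x^{t,0,0})⟩ − Σ_{i=0}^{s−1} Σ_{j=0}^{p−1} ⟨ x^{t,i,j} − x*, U_{σ(i+1)} ∇_{σ(i+1)} f_{π(j)}(x^{t,i,j}) ⟩ |, the Block-SMOO iterates satisfy E[B^t] ≤ (1/2) α_t σ (ΔL + σ) s² p². -/

import Mathlib

open MeasureTheory Finset
open scoped RealInnerProductSpace BigOperators

/-- The orthogonal projection `U_b * U_bᵀ` onto the coordinates of block `b`,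
where `blk` assigns each coordinate to its block; so for a differentiable `h`,
`blockProj blk b (gradient h x)` represents `U_b ∇_b h(x)`, and block-gradient norms
and inner products can be expressed through it. -/
noncomputable def blockProj {n s : ℕ} (blk : Fin n → Fin s) (b : Fin s)
    (v : EuclideanSpace ℝ (Fin n)) : EuclideanSpace ℝ (Fin n) :=
  WithLp.toLp 2 (fun k => if blk k = b then v k else 0)

lemma blockProj_add {n s : ℕ} (blk : Fin n → Fin s) (b : Fin s)
    (u v : EuclideanSpace ℝ (Fin n)) :
    blockProj blk b (u + v) = blockProj blk b u + blockProj blk b v := by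
  ext k
  simp only [blockProj, PiLp.add_apply, WithLp.ofLp_toLp]
  split <;> simp

lemma blockProj_sub {n s : ℕ} (blk : Fin n → Fin s) (b : Fin s)
    (u v : EuclideanSpace ℝ (Fin n)) :
    blockProj blk b (u - v) = blockProj blk b u - blockProj blk b v := by
  ext k
  simp only [blockProj, PiLp.sub_apply, WithLp.ofLp_toLp]
  split <;> simp

lemma blockProj_smul {n s : ℕ} (blk : Fin n → Fin s) (b : Fin s)
    (c : ℝ) (v : EuclideanSpace ℝ (Fin n)) :
    blockProj blk b (c • v) = c • blockProj blk b v := by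
  ext k
  simp only [blockProj, PiLp.smul_apply, smul_eq_mul, WithLp.ofLp_toLp]
  split <;> simp

lemma norm_blockProj_le {n s : ℕ} (blk : Fin n → Fin s) (b : Fin s)
    (v : EuclideanSpace ℝ (Fin n)) : ‖blockProj blk b v‖ ≤ ‖v‖ := by
  rw [EuclideanSpace.norm_eq, EuclideanSpace.norm_eq]
  apply Real.sqrt_le_sqrt
  apply Finset.sum_le_sum
  intro k _
  have hbp : blockProj blk b v k = if blk k = b then v k else 0 := rfl
  rw [hbp]
  split_ifs with h
  · exact le_refl _
  · simpa using sq_nonneg ‖v k‖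

lemma blockProj_sum {n s : ℕ} (blk : Fin n → Fin s)
    (v : EuclideanSpace ℝ (Fin n)) :
    ∑ b : Fin s, blockProj blk b v = v := by
  ext k
  rw [WithLp.ofLp_sum, Finset.sum_apply]
  simp [blockProj]

/-- `blockProj` as a continuous linear map. -/
noncomputable def blockProjCLM {n s : ℕ} (blk : Fin n → Fin s) (b : Fin s) :
    EuclideanSpace ℝ (Fin n) →L[ℝ] EuclideanSpace ℝ (Fin n) :=
  LinearMap.mkContinuous
    { toFun := blockProj blk b
      map_add' := blockProj_add blk b
      map_smul' := blockProj_smul blk b } 1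
    (fun v => by simpa using norm_blockProj_le blk b v)

lemma blockProjCLM_apply {n s : ℕ} (blk : Fin n → Fin s) (b : Fin s)
    (v : EuclideanSpace ℝ (Fin n)) : blockProjCLM blk b v = blockProj blk b v := rfl

/-- On a probability space, an `L²` bound gives an `L¹` bound. -/
lemma int_le_of_sq {Ω : Type*} [MeasurableSpace Ω] (μ : Measure Ω) [IsProbabilityMeasure μ]
    (g : Ω → ℝ) (hint : Integrable g μ)
    (hint2 : Integrable (fun ω => g ω ^ 2) μ) (σ : ℝ) (hσ : 0 ≤ σ)
    (h : ∫ ω, g ω ^ 2 ∂μ ≤ σ ^ 2) : ∫ ω, g ω ∂μ ≤ σ := by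
  rcases eq_or_lt_of_le hσ with h0 | h0
  · have hle : ∫ ω, g ω ^ 2 ∂μ ≤ 0 := by simpa [← h0] using h
    have heq : ∫ ω, g ω ^ 2 ∂μ = 0 :=
      le_antisymm hle (integral_nonneg fun ω => sq_nonneg _)
    have hz : (fun ω => g ω ^ 2) =ᵐ[μ] 0 :=
      (integral_eq_zero_iff_of_nonneg (fun ω => sq_nonneg (g ω)) hint2).mp heq
    have hz' : g =ᵐ[μ] 0 := by
      filter_upwards [hz] with ω hω
      have : g ω ^ 2 = 0 := hω
      simpa using pow_eq_zero_iff (n := 2) (by norm_num) |>.mp this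
    rw [integral_congr_ae hz']
    simp [← h0]
  · have hpt : ∀ ω, g ω ≤ g ω ^ 2 / (2 * σ) + σ / 2 := by
      intro ω
      rw [div_add_div _ _ (by positivity) (by norm_num), le_div_iff₀ (by positivity)]
      nlinarith [sq_nonneg (g ω - σ)]
    calc ∫ ω, g ω ∂μ ≤ ∫ ω, (g ω ^ 2 / (2 * σ) + σ / 2) ∂μ :=
          integral_mono hint ((hint2.div_const _).add (integrable_const _)) hpt
      _ = (∫ ω, g ω ^ 2 ∂μ) / (2 * σ) + σ / 2 := by
          rw [integral_add (hint2.div_const _) (integrable_const _), integral_div,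
            integral_const]
          simp
      _ ≤ σ ^ 2 / (2 * σ) + σ / 2 := by gcongr
      _ = σ := by field_simp; ring

lemma gauss_sum_real (m : ℕ) : ∑ j ∈ Finset.range m, (j : ℝ) = m * (m - 1) / 2 := by
  induction m with
  | zero => simp
  | succ m ih => rw [Finset.sum_range_succ, ih]; push_cast; ring

/-- Expected bound on the error term `B^t`: `E[B^t] ≤ (1/2) α_t σ (ΔL + σ) s² p²`. -/
theorem errorTermB_expected_bound
    -- problem data: `n` variables partitioned into `s` blocks by `blk`,
    -- `q` objectives `f k`, frequency vector `wt` with budget `p = ∑ k, wt k`,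
    -- weighted-sum function `Fm`, block permutation `σb`, index mapping `π`
    {n s q : ℕ} (blk : Fin n → Fin s)
    (f : Fin q → EuclideanSpace ℝ (Fin n) → ℝ)
    (wt : Fin q → ℕ) (p : ℕ) (hp : p = ∑ k, wt k) (hp1 : 1 ≤ p)
    (Fm : EuclideanSpace ℝ (Fin n) → ℝ)
    (hFm : ∀ x, Fm x = ∑ k, ((wt k : ℝ) / (p : ℝ)) * f k x)
    (σb : Equiv.Perm (Fin s)) (π : ℕ → Fin q)
    (hπ : ∀ k, ((Finset.range p).filter (fun j => π j = k)).card = wt k)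
    -- probability space and the filtration `𝓕 t i j` generated by `x^{0,0,0}`
    -- and all the `ξ`'s preceding step `(t,i,j)`
    {Ω : Type*} [mΩ : MeasurableSpace Ω] (μ : Measure Ω) [IsProbabilityMeasure μ]
    (𝓕 : ℕ → ℕ → ℕ → MeasurableSpace Ω)
    (hFle : ∀ t i j, 𝓕 t i j ≤ mΩ)
    (hFmono : ∀ t i j, 𝓕 t i j ≤ 𝓕 t i (j + 1))
    (hFmono' : ∀ t i, 𝓕 t i p ≤ 𝓕 t (i + 1) 0)
    (hFmono'' : ∀ t, 𝓕 t s p ≤ 𝓕 (t + 1) 0 0)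
    -- Block-SMOO iterates `X t i j` and stochastic gradients `G t i j`
    (X G : ℕ → ℕ → ℕ → Ω → EuclideanSpace ℝ (Fin n))
    (α : ℕ → ℝ) (hα : ∀ t, 0 < α t)
    (hupd : ∀ t i (hi : i < s), ∀ j < p, ∀ ω,
      X t i (j + 1) ω = X t i j ω - α t • blockProj blk (σb ⟨i, hi⟩) (G t i j ω))
    (hrow : ∀ t, ∀ i < s, X t (i + 1) 0 = X t i p)
    (hout : ∀ t, X (t + 1) 0 0 = X t s p)
    (hXmeas : ∀ t i j, StronglyMeasurable[𝓕 t i j] (X t i j))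
    (hGmeas : ∀ t i j, StronglyMeasurable[𝓕 t i (j + 1)] (G t i j))
    -- Assumption A1: `L`-smoothness of each `f k` and lower bound of `Fm`
    (L : ℝ) (hLpos : 0 < L)
    (hdiff : ∀ k, Differentiable ℝ (f k))
    (hLip : ∀ k x y, ‖gradient (f k) x - gradient (f k) y‖ ≤ L * ‖x - y‖)
    (Fstar : ℝ) (hFstar : Fstar = ⨅ x, Fm x) (hbdd : BddBelow (Set.range Fm))
    -- Assumption A2: unbiasedness and conditionally bounded second moment
    (σv : ℝ) (hσv : 0 ≤ σv)
    (hGint : ∀ t i j, Integrable (G t i j) μ)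
    (hG2int : ∀ t i j, Integrable (fun ω => ‖G t i j ω‖ ^ 2) μ)
    (hunb : ∀ t i, i < s → ∀ j < p,
      μ[G t i j | 𝓕 t i j] =ᵐ[μ] fun ω => gradient (f (π j)) (X t i j ω))
    (h2nd : ∀ t i, i < s → ∀ j < p,
      ∀ᵐ ω ∂μ, (μ[fun ω' => ‖G t i j ω'‖ ^ 2 | 𝓕 t i j]) ω ≤ σv ^ 2)
    -- Assumption A2 (final clause): the true gradients are bounded by `σv`
    (hgb : ∀ k x, ‖gradient (f k) x‖ ≤ σv)
    -- Assumption A3: convexity, existence of a minimizer, and bounded iterates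
    (hconv : ∀ k, ConvexOn ℝ Set.univ (f k))
    (xstar : EuclideanSpace ℝ (Fin n)) (hmin : ∀ x, Fm xstar ≤ Fm x)
    (Δ : ℝ) (hΔ : ∀ t, ∀ᵐ ω ∂μ, ‖X t 0 0 ω - xstar‖ ≤ Δ)
    (t : ℕ)
    (B : Ω → ℝ)
    (hB : ∀ ω, B ω =
      |(p : ℝ) * ⟪X t 0 0 ω - xstar, gradient Fm (X t 0 0 ω)⟫ -
        ∑ i : Fin s, ∑ j ∈ Finset.range p,
          ⟪X t (i : ℕ) j ω - xstar,
            blockProj blk (σb i) (gradient (f (π j)) (X t (i : ℕ) j ω))⟫|)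
    (hBint : Integrable B μ) :
    ∫ ω, B ω ∂μ ≤
      (1 / 2) * α t * σv * (Δ * L + σv) * (s : ℝ) ^ 2 * (p : ℝ) ^ 2 := by
  have hFmEq : Fm = fun x => ∑ k, ((wt k : ℝ) / (p : ℝ)) * f k x := funext hFm
  subst hFmEq
  have hαt : (0 : ℝ) < α t := hα t
  have hpR : (0 : ℝ) < (p : ℝ) := by exact_mod_cast hp1
  have hΔ0 : 0 ≤ Δ := by
    obtain ⟨ω, hω⟩ := (hΔ t).exists
    exact le_trans (norm_nonneg _) hω
  have hC0 : 0 ≤ Δ * L + σv := by positivity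
  -- gradient of the weighted sum
  have hgrad : ∀ x, gradient (fun x => ∑ k, ((wt k : ℝ) / (p : ℝ)) * f k x) x
      = ∑ k, ((wt k : ℝ) / (p : ℝ)) • gradient (f k) x := by
    intro x
    have hF : HasFDerivAt (fun x => ∑ k, ((wt k : ℝ) / (p : ℝ)) * f k x)
        (∑ k, ((wt k : ℝ) / (p : ℝ)) • fderiv ℝ (f k) x) x :=
      HasFDerivAt.fun_sum (fun k _ => ((hdiff k x).hasFDerivAt).const_mul _)
    have h2 := hF.hasGradientAt
    rw [h2.gradient, map_sum]
    congr 1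
    funext k
    rw [_root_.map_smul]
    rfl
  -- expected norm of the stochastic gradients
  have hGexp : ∀ i, i < s → ∀ j, j < p → ∫ ω, ‖G t i j ω‖ ∂μ ≤ σv := by
    intro i hi j hj
    have h1 : ∫ ω, (μ[fun ω' => ‖G t i j ω'‖ ^ 2 | 𝓕 t i j]) ω ∂μ
        = ∫ ω, ‖G t i j ω‖ ^ 2 ∂μ := integral_condExp (hFle t i j)
    have hsq : ∫ ω, ‖G t i j ω‖ ^ 2 ∂μ ≤ σv ^ 2 := by
      rw [← h1]
      calc ∫ ω, (μ[fun ω' => ‖G t i j ω'‖ ^ 2 | 𝓕 t i j]) ω ∂μ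
          ≤ ∫ _ω, σv ^ 2 ∂μ :=
            integral_mono_ae integrable_condExp (integrable_const _) (h2nd t i hi j hj)
        _ = σv ^ 2 := by simp
    exact int_le_of_sq μ _ (hGint t i j).norm (hG2int t i j) σv hσv hsq
  -- integrability and expected drift of the iterates
  have key : ∀ i, i < s → ∀ j, j ≤ p →
      Integrable (fun ω => X t i j ω - X t 0 0 ω) μ ∧
      ∫ ω, ‖X t i j ω - X t 0 0 ω‖ ∂μ ≤ α t * σv * ((i * p + j : ℕ) : ℝ) := by
    have row : ∀ i, ∀ hi : i < s, ∀ j, j ≤ p →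
        (Integrable (fun ω => X t i 0 ω - X t 0 0 ω) μ ∧
         ∫ ω, ‖X t i 0 ω - X t 0 0 ω‖ ∂μ ≤ α t * σv * ((i * p + 0 : ℕ) : ℝ)) →
        (Integrable (fun ω => X t i j ω - X t 0 0 ω) μ ∧
         ∫ ω, ‖X t i j ω - X t 0 0 ω‖ ∂μ ≤ α t * σv * ((i * p + j : ℕ) : ℝ)) := by
      intro i hi j
      induction j with
      | zero => exact fun _ h0 => h0
      | succ j ih =>
        intro hj h0
        have hjp : j < p := lt_of_lt_of_le (Nat.lt_succ_self j) hj
        obtain ⟨ih1, ih2⟩ := ih (le_of_lt hjp) h0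
        have hfun : (fun ω => X t i (j + 1) ω - X t 0 0 ω)
            = fun ω => (X t i j ω - X t 0 0 ω)
                - α t • blockProj blk (σb ⟨i, hi⟩) (G t i j ω) := by
          funext ω
          rw [hupd t i hi j hjp ω]
          abel
        have hPG : Integrable (fun ω => blockProj blk (σb ⟨i, hi⟩) (G t i j ω)) μ :=
          (blockProjCLM blk (σb ⟨i, hi⟩)).integrable_comp (hGint t i j)
        have hint1 : Integrable
            (fun ω => (X t i j ω - X t 0 0 ω)
              - α t • blockProj blk (σb ⟨i, hi⟩) (G t i j ω)) μ :=
          ih1.sub (hPG.smul (α t))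
        have hnorm : (fun ω => ‖X t i (j + 1) ω - X t 0 0 ω‖)
            = fun ω => ‖(X t i j ω - X t 0 0 ω)
                - α t • blockProj blk (σb ⟨i, hi⟩) (G t i j ω)‖ := by
          funext ω
          rw [congrFun hfun ω]
        constructor
        · rw [hfun]; exact hint1
        · rw [show (∫ ω, ‖X t i (j + 1) ω - X t 0 0 ω‖ ∂μ)
              = ∫ ω, ‖(X t i j ω - X t 0 0 ω)
                - α t • blockProj blk (σb ⟨i, hi⟩) (G t i j ω)‖ ∂μ from by rw [hnorm]]
          have hpt : ∀ ω, ‖(X t i j ω - X t 0 0 ω)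
              - α t • blockProj blk (σb ⟨i, hi⟩) (G t i j ω)‖
              ≤ ‖X t i j ω - X t 0 0 ω‖ + α t * ‖G t i j ω‖ := by
            intro ω
            refine (norm_sub_le _ _).trans ?_
            gcongr
            rw [norm_smul, Real.norm_eq_abs, abs_of_pos hαt]
            exact mul_le_mul_of_nonneg_left (norm_blockProj_le _ _ _) (le_of_lt hαt)
          calc ∫ ω, ‖(X t i j ω - X t 0 0 ω)
                - α t • blockProj blk (σb ⟨i, hi⟩) (G t i j ω)‖ ∂μ
              ≤ ∫ ω, (‖X t i j ω - X t 0 0 ω‖ + α t * ‖G t i j ω‖) ∂μ :=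
                integral_mono hint1.norm
                  (ih1.norm.add (((hGint t i j).norm).const_mul _)) hpt
            _ = (∫ ω, ‖X t i j ω - X t 0 0 ω‖ ∂μ) + α t * ∫ ω, ‖G t i j ω‖ ∂μ := by
                rw [integral_add ih1.norm (((hGint t i j).norm).const_mul _),
                  integral_const_mul]
            _ ≤ α t * σv * ((i * p + j : ℕ) : ℝ) + α t * σv := by
                have := hGexp i hi j hjp
                have h3 : α t * ∫ ω, ‖G t i j ω‖ ∂μ ≤ α t * σv :=
                  mul_le_mul_of_nonneg_left this (le_of_lt hαt)
                exact add_le_add ih2 h3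
            _ = α t * σv * ((i * p + (j + 1) : ℕ) : ℝ) := by push_cast; ring
    have base : ∀ i, i < s →
        Integrable (fun ω => X t i 0 ω - X t 0 0 ω) μ ∧
        ∫ ω, ‖X t i 0 ω - X t 0 0 ω‖ ∂μ ≤ α t * σv * ((i * p + 0 : ℕ) : ℝ) := by
      intro i
      induction i with
      | zero =>
        intro _
        constructor
        · simpa [sub_self] using
            (integrable_const (0 : EuclideanSpace ℝ (Fin n)) (μ := μ))
        · simp [sub_self]
      | succ i ih =>
        intro hi
        have hi' : i < s := Nat.lt_of_succ_lt hi
        have hip := row i hi' p le_rfl (ih hi')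
        have hhr : X t (i + 1) 0 = X t i p := hrow t i hi'
        constructor
        · simp only [hhr]; exact hip.1
        · simp only [hhr]
          calc ∫ ω, ‖X t i p ω - X t 0 0 ω‖ ∂μ
              ≤ α t * σv * ((i * p + p : ℕ) : ℝ) := hip.2
            _ = α t * σv * (((i + 1) * p + 0 : ℕ) : ℝ) := by push_cast; ring
    exact fun i hi j hj => row i hi j hj (base i hi)
  -- the exact identity for the first term of `B`
  have hone : ∀ (w v : EuclideanSpace ℝ (Fin n)),
      ∑ i : Fin s, ⟪w, blockProj blk (σb i) v⟫ = ⟪w, v⟫ := by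
    intro w v
    rw [← inner_sum]
    congr 1
    rw [Equiv.sum_comp σb (fun b => blockProj blk b v)]
    exact blockProj_sum blk v
  have hident : ∀ ω, (p : ℝ) *
        ⟪X t 0 0 ω - xstar,
          gradient (fun x => ∑ k, ((wt k : ℝ) / (p : ℝ)) * f k x) (X t 0 0 ω)⟫
      = ∑ i : Fin s, ∑ j ∈ Finset.range p,
          ⟪X t 0 0 ω - xstar,
            blockProj blk (σb i) (gradient (f (π j)) (X t 0 0 ω))⟫ := by
    intro ω
    set w := X t 0 0 ω - xstar with hw
    set x0 := X t 0 0 ω with hx0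
    rw [hgrad x0]
    have hrhs : ∑ i : Fin s, ∑ j ∈ Finset.range p,
        ⟪w, blockProj blk (σb i) (gradient (f (π j)) x0)⟫
        = ∑ j ∈ Finset.range p, ⟪w, gradient (f (π j)) x0⟫ := by
      rw [Finset.sum_comm]
      exact Finset.sum_congr rfl fun j _ => hone w (gradient (f (π j)) x0)
    rw [hrhs]
    have hfib : ∑ j ∈ Finset.range p, ⟪w, gradient (f (π j)) x0⟫
        = ∑ k, (wt k : ℝ) * ⟪w, gradient (f k) x0⟫ := by
      rw [← Finset.sum_fiberwise' (Finset.range p) π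
        (fun k => ⟪w, gradient (f k) x0⟫)]
      refine Finset.sum_congr rfl fun k _ => ?_
      rw [Finset.sum_const, hπ k, nsmul_eq_mul]
    rw [hfib, inner_sum, Finset.mul_sum]
    refine Finset.sum_congr rfl fun k _ => ?_
    rw [real_inner_smul_right]
    field_simp
  -- per-term deterministic bound
  have hterm : ∀ ω, ‖X t 0 0 ω - xstar‖ ≤ Δ → ∀ (i : Fin s) (j : ℕ),
      |⟪X t 0 0 ω - xstar,
          blockProj blk (σb i) (gradient (f (π j)) (X t 0 0 ω))⟫ -
        ⟪X t (i : ℕ) j ω - xstar,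
          blockProj blk (σb i) (gradient (f (π j)) (X t (i : ℕ) j ω))⟫|
      ≤ (Δ * L + σv) * ‖X t (i : ℕ) j ω - X t 0 0 ω‖ := by
    intro ω hω i j
    set x0 := X t 0 0 ω with hx0
    set y := X t (i : ℕ) j ω with hy
    set g0 := gradient (f (π j)) x0 with hg0
    set g1 := gradient (f (π j)) y with hg1
    have hsplit : ⟪x0 - xstar, blockProj blk (σb i) g0⟫ -
        ⟪y - xstar, blockProj blk (σb i) g1⟫
        = ⟪x0 - xstar, blockProj blk (σb i) g0 - blockProj blk (σb i) g1⟫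
          + ⟪x0 - y, blockProj blk (σb i) g1⟫ := by
      have h1 : x0 - y = (x0 - xstar) - (y - xstar) := by abel
      rw [h1]
      simp only [inner_sub_left, inner_sub_right]
      ring
    rw [hsplit]
    have hA : |⟪x0 - xstar, blockProj blk (σb i) g0 - blockProj blk (σb i) g1⟫|
        ≤ Δ * (L * ‖y - x0‖) := by
      refine (abs_real_inner_le_norm _ _).trans ?_
      have h2 : ‖blockProj blk (σb i) g0 - blockProj blk (σb i) g1‖ ≤ L * ‖y - x0‖ := by
        rw [← blockProj_sub]
        refine (norm_blockProj_le _ _ _).trans ?_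
        rw [norm_sub_rev y x0]
        exact hLip (π j) x0 y
      exact mul_le_mul hω h2 (norm_nonneg _) hΔ0
    have hBb : |⟪x0 - y, blockProj blk (σb i) g1⟫| ≤ ‖y - x0‖ * σv := by
      refine (abs_real_inner_le_norm _ _).trans ?_
      rw [norm_sub_rev x0 y]
      exact mul_le_mul_of_nonneg_left
        ((norm_blockProj_le _ _ _).trans (hgb (π j) y)) (norm_nonneg _)
    calc |⟪x0 - xstar, blockProj blk (σb i) g0 - blockProj blk (σb i) g1⟫
          + ⟪x0 - y, blockProj blk (σb i) g1⟫|
        ≤ |⟪x0 - xstar, blockProj blk (σb i) g0 - blockProj blk (σb i) g1⟫|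
          + |⟪x0 - y, blockProj blk (σb i) g1⟫| := abs_add_le _ _
      _ ≤ Δ * (L * ‖y - x0‖) + ‖y - x0‖ * σv := add_le_add hA hBb
      _ = (Δ * L + σv) * ‖y - x0‖ := by ring
  -- sum of drift norms
  set S : Ω → ℝ := fun ω => ∑ i : Fin s, ∑ j ∈ Finset.range p,
    ‖X t (i : ℕ) j ω - X t 0 0 ω‖ with hS
  have hSint : Integrable S μ := by
    apply integrable_finset_sum
    intro i _
    apply integrable_finset_sum
    intro j hj
    exact (key i i.isLt j (le_of_lt (Finset.mem_range.mp hj))).1.norm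
  -- a.e. bound for B
  have hmain : ∀ᵐ ω ∂μ, B ω ≤ (Δ * L + σv) * S ω := by
    filter_upwards [hΔ t] with ω hω
    rw [hB ω, hident ω]
    rw [← Finset.sum_sub_distrib]
    have h4 : ∀ i : Fin s,
        (∑ j ∈ Finset.range p,
            ⟪X t 0 0 ω - xstar,
              blockProj blk (σb i) (gradient (f (π j)) (X t 0 0 ω))⟫)
          - ∑ j ∈ Finset.range p,
            ⟪X t (i : ℕ) j ω - xstar,
              blockProj blk (σb i) (gradient (f (π j)) (X t (i : ℕ) j ω))⟫
        = ∑ j ∈ Finset.range p,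
            (⟪X t 0 0 ω - xstar,
               blockProj blk (σb i) (gradient (f (π j)) (X t 0 0 ω))⟫
             - ⟪X t (i : ℕ) j ω - xstar,
               blockProj blk (σb i) (gradient (f (π j)) (X t (i : ℕ) j ω))⟫) :=
      fun i => (Finset.sum_sub_distrib _ _).symm
    calc |∑ i : Fin s, ((∑ j ∈ Finset.range p,
            ⟪X t 0 0 ω - xstar,
              blockProj blk (σb i) (gradient (f (π j)) (X t 0 0 ω))⟫)
          - ∑ j ∈ Finset.range p,
            ⟪X t (i : ℕ) j ω - xstar,
              blockProj blk (σb i) (gradient (f (π j)) (X t (i : ℕ) j ω))⟫)|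
        ≤ ∑ i : Fin s, |(∑ j ∈ Finset.range p,
            ⟪X t 0 0 ω - xstar,
              blockProj blk (σb i) (gradient (f (π j)) (X t 0 0 ω))⟫)
          - ∑ j ∈ Finset.range p,
            ⟪X t (i : ℕ) j ω - xstar,
              blockProj blk (σb i) (gradient (f (π j)) (X t (i : ℕ) j ω))⟫| :=
          Finset.abs_sum_le_sum_abs _ _
      _ ≤ ∑ i : Fin s, ∑ j ∈ Finset.range p,
            (Δ * L + σv) * ‖X t (i : ℕ) j ω - X t 0 0 ω‖ := by
          refine Finset.sum_le_sum fun i _ => ?_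
          rw [h4 i]
          refine (Finset.abs_sum_le_sum_abs _ _).trans ?_
          exact Finset.sum_le_sum fun j _ => hterm ω hω i j
      _ = (Δ * L + σv) * S ω := by
          rw [hS, Finset.mul_sum]
          exact Finset.sum_congr rfl fun i _ => (Finset.mul_sum _ _ _).symm
  -- expected bound on S
  have hSbound : ∫ ω, S ω ∂μ ≤ α t * σv * ((s : ℝ) ^ 2 * (p : ℝ) ^ 2 / 2) := by
    have hterm_int : ∀ (i : Fin s), ∀ j ∈ Finset.range p,
        Integrable (fun ω => ‖X t (i : ℕ) j ω - X t 0 0 ω‖) μ :=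
      fun i j hj => (key (i : ℕ) i.isLt j (le_of_lt (Finset.mem_range.mp hj))).1.norm
    have h5 : ∫ ω, S ω ∂μ = ∑ i : Fin s, ∑ j ∈ Finset.range p,
        ∫ ω, ‖X t (i : ℕ) j ω - X t 0 0 ω‖ ∂μ := by
      simp only [hS]
      rw [integral_finset_sum _ (fun (i : Fin s) _ =>
        integrable_finset_sum _ (hterm_int i))]
      exact Finset.sum_congr rfl fun (i : Fin s) _ =>
        integral_finset_sum _ (hterm_int i)
    rw [h5]
    have h6 : ∀ (i : Fin s), ∀ j ∈ Finset.range p,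
        ∫ ω, ‖X t (i : ℕ) j ω - X t 0 0 ω‖ ∂μ
        ≤ α t * σv * ((i : ℝ) * (p : ℝ) + (j : ℝ)) := by
      intro i j hj
      have h := (key (i : ℕ) i.isLt j (le_of_lt (Finset.mem_range.mp hj))).2
      refine h.trans (le_of_eq ?_)
      push_cast
      ring
    have h8 : ∑ i ∈ Finset.range s, ∑ j ∈ Finset.range p,
        ((i : ℝ) * (p : ℝ) + (j : ℝ)) ≤ (s : ℝ) ^ 2 * (p : ℝ) ^ 2 / 2 := by
      have hin : ∀ i : ℕ, ∑ j ∈ Finset.range p, ((i : ℝ) * (p : ℝ) + (j : ℝ))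
          = (p : ℝ) * ((i : ℝ) * (p : ℝ)) + (p : ℝ) * ((p : ℝ) - 1) / 2 := by
        intro i
        rw [Finset.sum_add_distrib, Finset.sum_const, gauss_sum_real,
          Finset.card_range, nsmul_eq_mul]
      have hout2 : ∑ i ∈ Finset.range s, ∑ j ∈ Finset.range p,
          ((i : ℝ) * (p : ℝ) + (j : ℝ))
          = (p : ℝ) ^ 2 * ((s : ℝ) * ((s : ℝ) - 1) / 2)
            + (s : ℝ) * ((p : ℝ) * ((p : ℝ) - 1) / 2) := by
        rw [Finset.sum_congr rfl fun i _ => hin i]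
        rw [Finset.sum_add_distrib, Finset.sum_const, Finset.card_range,
          nsmul_eq_mul, ← Finset.mul_sum]
        have hgs : ∑ i ∈ Finset.range s, ((i : ℝ) * (p : ℝ))
            = ((s : ℝ) * ((s : ℝ) - 1) / 2) * (p : ℝ) := by
          rw [← Finset.sum_mul, gauss_sum_real]
        rw [hgs]
        ring
      rw [hout2]
      have hs0 : (0 : ℝ) ≤ (s : ℝ) := Nat.cast_nonneg s
      nlinarith [mul_nonneg hs0 (le_of_lt hpR)]
    calc ∑ i : Fin s, ∑ j ∈ Finset.range p,
          ∫ ω, ‖X t (i : ℕ) j ω - X t 0 0 ω‖ ∂μ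
        ≤ ∑ i : Fin s, ∑ j ∈ Finset.range p,
          α t * σv * ((i : ℝ) * (p : ℝ) + (j : ℝ)) :=
          Finset.sum_le_sum fun i _ => Finset.sum_le_sum (h6 i)
      _ = α t * σv * (∑ i ∈ Finset.range s, ∑ j ∈ Finset.range p,
          ((i : ℝ) * (p : ℝ) + (j : ℝ))) := by
          rw [Finset.mul_sum]
          rw [← Fin.sum_univ_eq_sum_range (fun i => α t * σv *
            (∑ j ∈ Finset.range p, ((i : ℝ) * (p : ℝ) + (j : ℝ))))]
          exact Finset.sum_congr rfl fun i _ => (Finset.mul_sum _ _ _).symm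
      _ ≤ α t * σv * ((s : ℝ) ^ 2 * (p : ℝ) ^ 2 / 2) :=
          mul_le_mul_of_nonneg_left h8 (by positivity)
  -- combine
  calc ∫ ω, B ω ∂μ ≤ ∫ ω, (Δ * L + σv) * S ω ∂μ :=
        integral_mono_ae hBint (hSint.const_mul _) hmain
    _ = (Δ * L + σv) * ∫ ω, S ω ∂μ := integral_const_mul _ _
    _ ≤ (Δ * L + σv) * (α t * σv * ((s : ℝ) ^ 2 * (p : ℝ) ^ 2 / 2)) :=
        mul_le_mul_of_nonneg_left hSbound hC0
    _ = (1 / 2) * α t * σv * (Δ * L + σv) * (s : ℝ) ^ 2 * (p : ℝ) ^ 2 := by ring
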